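/- Let f = {f_t}_{t≥1} be a non-blocking anonymous age-based acknowledgment-based protocol for n players. If the expected latency of a player using f (when all players use f) is finite, then f is not in equilibrium. -/

import Mathlib

open scoped ENNReal

namespace Contention

/-- An acknowledgment-based protocol: maps a player's personal transmission history
(the list of her own past transmission indicators, oldest slot first) to the
probability of transmitting in the next slot. -/
abbrev Protocol : Type := List Bool → ℝ

/-- A protocol is valid if it always prescribes a probability in `[0,1]`. -/
def ValidProtocol (f : Protocol) : Prop := ∀ h : List Bool, 0 ≤ f h ∧ f h ≤ 1

/-- A joint transmission history: the list of transmission vectors, oldest slot first. -/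
abbrev Hist (n : ℕ) : Type := List (Fin n → Bool)

/-- The personal transmission history of player `i` extracted from a joint history. -/
def personal {n : ℕ} (h : Hist n) (i : Fin n) : List Bool := h.map fun v => v i

/-- Player `i` transmits alone (hence successfully) in the slot with transmission vector `v`. -/
def alone {n : ℕ} (v : Fin n → Bool) (i : Fin n) : Prop :=
  v i = true ∧ ∀ j : Fin n, j ≠ i → v j = false

instance {n : ℕ} (v : Fin n → Bool) (i : Fin n) : Decidable (alone v i) := by
  unfold alone; infer_instance

/-- Player `i` is still pending after joint history `h` (she never transmitted alone). -/
def pending {n : ℕ} (h : Hist n) (i : Fin n) : Prop := ∀ v ∈ h, ¬ alone v i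

instance {n : ℕ} (h : Hist n) (i : Fin n) : Decidable (pending h i) := by
  unfold pending; infer_instance

/-- Probability that the next slot has transmission vector `v`, given joint history `h`:
each pending player transmits independently with the probability her protocol assigns to
her personal history, and players that already succeeded stay quiet. -/
noncomputable def stepProb {n : ℕ} (F : Fin n → Protocol) (h : Hist n) (v : Fin n → Bool) : ℝ :=
  ∏ i : Fin n,
    if pending h i then
      (if v i = true then F i (personal h i) else 1 - F i (personal h i))
    else
      (if v i = true then 0 else 1)

/-- Probability that, starting after joint history `h`, the next `e.length` slots produce
exactly the extension `e`. -/
noncomputable def contProb {n : ℕ} (F : Fin n → Protocol) (h e : Hist n) : ℝ :=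
  ∏ t ∈ Finset.range e.length, stepProb F (h ++ e.take t) (e.getD t fun _ => false)

/-- Probability that the first `h.length` slots produce exactly the joint history `h`. -/
noncomputable def histProb {n : ℕ} (F : Fin n → Protocol) (h : Hist n) : ℝ := contProb F [] h

/-- Conditional probability, given joint history `h`, that player `i` is still pending
after `s` further slots. -/
noncomputable def condPendProb {n : ℕ} (F : Fin n → Protocol) (h : Hist n) (i : Fin n)
    (s : ℕ) : ℝ :=
  ∑ e : Fin s → Fin n → Bool,
    if pending (h ++ List.ofFn e) i then contProb F h (List.ofFn e) else 0

/-- Conditional expected latency `E[Tᵢ | h]` of player `i` given joint history `h`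
(`Tᵢ` is the first slot in which `i` transmits alone), computed via
`E[Tᵢ | h] = ∑_{s ≥ 0} Pr(Tᵢ > s | h)`; for `s ≤ h.length` the event `Tᵢ > s` is
determined by `h`, and for larger `s` its probability is `condPendProb`. -/
noncomputable def condLatency {n : ℕ} (F : Fin n → Protocol) (h : Hist n) (i : Fin n) : ℝ≥0∞ :=
  ∑' s : ℕ,
    if s ≤ h.length then (if pending (h.take s) i then 1 else 0)
    else ENNReal.ofReal (condPendProb F h i (s - h.length))

/-- Conditional expected number of further slots until player `i` succeeds, given joint
history `h` (the slot of the successful transmission itself is counted). -/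
noncomputable def condRemaining {n : ℕ} (F : Fin n → Protocol) (h : Hist n) (i : Fin n) : ℝ≥0∞ :=
  ∑' s : ℕ, ENNReal.ofReal (condPendProb F h i s)

/-- A profile of protocols is in equilibrium if after no joint history (arising with
positive probability) can a player strictly decrease her conditional expected latency
by unilaterally switching to another (valid) protocol. -/
def IsEquilibrium {n : ℕ} (F : Fin n → Protocol) : Prop :=
  ∀ i : Fin n, ∀ h : Hist n, 0 < histProb F h →
    ∀ g : Protocol, ValidProtocol g →
      condLatency F h i ≤ condLatency (Function.update F i g) h i

end Contention

namespace Contention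

/-- An age-based protocol: the transmission probability in slot `t` (that is, after a
personal history of length `t − 1`) is `p t`, depending only on the time `t ≥ 1`. -/
def ageProtocol (p : ℕ → ℝ) : Protocol := fun h => p (h.length + 1)

end Contention

namespace Contention


variable {n : ℕ}

lemma not_alone_of_false {v : Fin n → Bool} {i : Fin n} (h : v i = false) : ¬ alone v i := by
  intro ha; rw [ha.1] at h; simp at h

lemma pending_take {h : Hist n} {i : Fin n} (hp : pending h i) (s : ℕ) :
    pending (h.take s) i := fun v hv => hp v (List.mem_of_mem_take hv)

lemma valid_age {p : ℕ → ℝ} (hp : ∀ t, 1 ≤ t → 0 ≤ p t ∧ p t < 1) :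
    ValidProtocol (ageProtocol p) := by
  intro h
  have := hp (h.length + 1) (by omega)
  exact ⟨this.1, le_of_lt this.2⟩

lemma valid_one : ValidProtocol (fun _ => (1:ℝ)) := fun _ => ⟨zero_le_one, le_refl _⟩

lemma stepProb_nonneg {F : Fin n → Protocol} (hF : ∀ i, ValidProtocol (F i)) (h : Hist n)
    (v : Fin n → Bool) : 0 ≤ stepProb F h v := by
  apply Finset.prod_nonneg
  intro j _
  by_cases hp : pending h j <;> by_cases hv : v j = true <;>
    simp [hp, hv, (hF j (personal h j)).1, sub_nonneg.2 (hF j (personal h j)).2]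

lemma contProb_nonneg {F : Fin n → Protocol} (hF : ∀ i, ValidProtocol (F i)) (h e : Hist n) :
    0 ≤ contProb F h e :=
  Finset.prod_nonneg fun t _ => stepProb_nonneg hF _ _

end Contention

namespace Contention

lemma stepProb_update_eq_zero {F : Fin n → Protocol} {h : Hist n} {i : Fin n}
    (hpend : pending h i)
    (hblock : ∀ j : Fin n, j ≠ i → pending h j → F j (personal h j) = 0)
    {v : Fin n → Bool} (hna : ¬ alone v i) :
    stepProb (Function.update F i (fun _ => (1:ℝ))) h v = 0 := by
  by_cases hvi : v i = true
  · have hex : ∃ j, j ≠ i ∧ v j = true := by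
      by_contra hc
      push_neg at hc
      exact hna ⟨hvi, fun j hj => by simpa using hc j hj⟩
    obtain ⟨j, hji, hvj⟩ := hex
    apply Finset.prod_eq_zero (Finset.mem_univ j)
    by_cases hpj : pending h j
    · simp [hpj, hvj, Function.update_of_ne hji, hblock j hji hpj]
    · simp [hpj, hvj]
  · apply Finset.prod_eq_zero (Finset.mem_univ i)
    simp [hpend, hvi, Function.update_self]

lemma condPendProb_update_zero {F : Fin n → Protocol} {h : Hist n} {i : Fin n}
    (hpend : pending h i)
    (hblock : ∀ j : Fin n, j ≠ i → pending h j → F j (personal h j) = 0)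
    {m : ℕ} (hm : 1 ≤ m) :
    condPendProb (Function.update F i fun _ => (1:ℝ)) h i m = 0 := by
  apply Finset.sum_eq_zero
  intro e _
  by_cases hp : pending (h ++ List.ofFn e) i
  · simp only [hp, if_true]
    have h0 : ¬ alone (e ⟨0, hm⟩) i := by
      apply hp
      apply List.mem_append_right
      rw [List.mem_ofFn]
      exact ⟨⟨0, hm⟩, rfl⟩
    unfold contProb
    apply Finset.prod_eq_zero (i := 0)
    · simpa using (show 0 < m from hm)
    · have ht : (List.ofFn e).take 0 = ([] : Hist n) := rfl
      rw [ht, List.append_nil]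
      have hg : (List.ofFn e).getD 0 (fun _ => false) = e ⟨0, hm⟩ := by
        rw [List.getD_eq_getElem _ _ (by simpa using (show 0 < m from hm))]
        exact List.getElem_ofFn _
      rw [hg]
      exact stepProb_update_eq_zero hpend hblock h0
  · simp [hp]

lemma dev_latency_le {F : Fin n → Protocol} {h : Hist n} {i : Fin n}
    (hpend : pending h i)
    (hblock : ∀ j : Fin n, j ≠ i → pending h j → F j (personal h j) = 0) :
    condLatency (Function.update F i fun _ => (1:ℝ)) h i ≤ (h.length + 1 : ℝ≥0∞) := by
  unfold condLatency
  rw [tsum_eq_sum (s := Finset.range (h.length + 1)) (by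
    intro s hs
    simp only [Finset.mem_range, not_lt] at hs
    rw [if_neg (by omega)]
    rw [condPendProb_update_zero hpend hblock (by omega)]
    simp)]
  apply le_trans (Finset.sum_le_sum (g := fun _ => (1:ℝ≥0∞)) (fun s hs => by
    simp only [Finset.mem_range] at hs
    rw [if_pos (by omega)]
    split <;> simp))
  simp

end Contention

namespace Contention

lemma stepProb_allfalse_pos {p : ℕ → ℝ} (hp : ∀ t, 1 ≤ t → 0 ≤ p t ∧ p t < 1) (h : Hist n) :
    0 < stepProb (fun _ : Fin n => ageProtocol p) h (fun _ => false) := by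
  apply Finset.prod_pos
  intro j _
  by_cases hpj : pending h j
  · simp only [hpj, if_true, Bool.false_eq_true, if_false]
    have he : ageProtocol p (personal h j) = p (h.length + 1) := by
      simp [ageProtocol, personal]
    rw [he]
    linarith [(hp (h.length + 1) (by omega)).2]
  · simp [hpj]

lemma ofFn_one_allfalse :
    List.ofFn (fun _ : Fin 1 => (fun _ : Fin n => false)) = [fun _ : Fin n => false] := by
  simp [List.ofFn_succ]

lemma contProb_singleton (F : Fin n → Protocol) (h : Hist n) (v : Fin n → Bool) :
    contProb F h [v] = stepProb F h v := by
  unfold contProb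
  simp

lemma condPendProb_one_ge {p : ℕ → ℝ} (hp : ∀ t, 1 ≤ t → 0 ≤ p t ∧ p t < 1)
    {h : Hist n} {i : Fin n} (hpend : pending h i) :
    stepProb (fun _ : Fin n => ageProtocol p) h (fun _ => false)
      ≤ condPendProb (fun _ : Fin n => ageProtocol p) h i 1 := by
  have hF : ∀ j : Fin n, ValidProtocol ((fun _ : Fin n => ageProtocol p) j) :=
    fun _ => valid_age hp
  unfold condPendProb
  have := Finset.single_le_sum
    (f := fun e : Fin 1 → Fin n → Bool =>
      if pending (h ++ List.ofFn e) i then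
        contProb (fun _ : Fin n => ageProtocol p) h (List.ofFn e) else 0)
    (fun e _ => by
      split
      · exact contProb_nonneg hF _ _
      · exact le_refl 0)
    (Finset.mem_univ (fun _ _ => false))
  refine le_trans ?_ this
  rw [ofFn_one_allfalse, if_pos, contProb_singleton]
  intro v hv
  rcases List.mem_append.1 hv with hv | hv
  · exact hpend v hv
  · simp at hv
    subst hv
    exact not_alone_of_false rfl

lemma orig_latency_gt {p : ℕ → ℝ} (hp : ∀ t, 1 ≤ t → 0 ≤ p t ∧ p t < 1)
    {h : Hist n} {i : Fin n} (hpend : pending h i) :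
    (h.length + 1 : ℝ≥0∞) < condLatency (fun _ : Fin n => ageProtocol p) h i := by
  set F := fun _ : Fin n => ageProtocol p with hFdef
  set f : ℕ → ℝ≥0∞ := fun s =>
    if s ≤ h.length then (if pending (h.take s) i then 1 else 0)
    else ENNReal.ofReal (condPendProb F h i (s - h.length)) with hfdef
  have hle : ∑ s ∈ Finset.range (h.length + 2), f s ≤ condLatency F h i :=
    ENNReal.sum_le_tsum _
  have heq : ∑ s ∈ Finset.range (h.length + 2), f s
      = (h.length + 1 : ℝ≥0∞) + ENNReal.ofReal (condPendProb F h i 1) := by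
    rw [Finset.sum_range_succ]
    have e1 : ∑ s ∈ Finset.range (h.length + 1), f s = (h.length + 1 : ℝ≥0∞) := by
      rw [Finset.sum_congr rfl (g := fun _ => (1:ℝ≥0∞)) (fun s hs => by
        simp only [Finset.mem_range] at hs
        simp only [hfdef]
        rw [if_pos (by omega), if_pos (pending_take hpend s)])]
      simp
    have e2 : f (h.length + 1) = ENNReal.ofReal (condPendProb F h i 1) := by
      simp only [hfdef]
      rw [if_neg (by omega)]
      norm_num
    rw [e1, e2]
  have hpos : (0:ℝ≥0∞) < ENNReal.ofReal (condPendProb F h i 1) :=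
    ENNReal.ofReal_pos.2 (lt_of_lt_of_le (stepProb_allfalse_pos hp h) (condPendProb_one_ge hp hpend))
  calc (h.length + 1 : ℝ≥0∞) < (h.length + 1 : ℝ≥0∞) + ENNReal.ofReal (condPendProb F h i 1) := by
        apply ENNReal.lt_add_right
        · simp
        · exact ne_of_gt hpos
    _ = ∑ s ∈ Finset.range (h.length + 2), f s := heq.symm
    _ ≤ condLatency F h i := hle

lemma not_equilibrium_of_blocked {p : ℕ → ℝ} (hp : ∀ t, 1 ≤ t → 0 ≤ p t ∧ p t < 1)
    {h : Hist n} {i : Fin n}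
    (hpos : 0 < histProb (fun _ : Fin n => ageProtocol p) h)
    (hpend : pending h i)
    (hblock : ∀ j : Fin n, j ≠ i → pending h j → p (h.length + 1) = 0) :
    ¬ IsEquilibrium (fun _ : Fin n => ageProtocol p) := by
  intro heq
  have h1 := heq i h hpos (fun _ => 1) valid_one
  have hb : ∀ j : Fin n, j ≠ i → pending h j →
      (fun _ : Fin n => ageProtocol p) j (personal h j) = 0 := by
    intro j hj hpj
    simpa [ageProtocol, personal] using hblock j hj hpj
  have h2 := dev_latency_le hpend hb
  have h3 := orig_latency_gt hp hpend
  exact absurd (h1.trans h2) (not_le.2 h3)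

end Contention

namespace Contention

lemma histProb_replicate_pos {p : ℕ → ℝ} (hp : ∀ t, 1 ≤ t → 0 ≤ p t ∧ p t < 1) (T : ℕ) :
    0 < histProb (fun _ : Fin n => ageProtocol p) (List.replicate T (fun _ => false)) := by
  unfold histProb contProb
  apply Finset.prod_pos
  intro t ht
  simp only [Finset.mem_range, List.length_replicate] at ht
  rw [List.nil_append]
  have h1 : (List.replicate T (fun _ : Fin n => false)).take t
      = List.replicate t (fun _ => false) := by
    rw [List.take_replicate]
    congr 1
    omega
  have h2 : (List.replicate T (fun _ : Fin n => false)).getD t (fun _ => false)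
      = (fun _ => false) := by
    rw [List.getD_eq_getElem _ _ (by simpa using ht)]
    exact List.getElem_replicate _
  rw [h1, h2]
  exact stepProb_allfalse_pos hp _

lemma pending_replicate_false (T : ℕ) (j : Fin n) :
    pending (List.replicate T (fun _ => false)) j := by
  intro v hv
  rw [List.eq_of_mem_replicate hv]
  exact not_alone_of_false rfl

end Contention

namespace Contention

def solo (n : ℕ) : Fin (n-1) → Fin n → Bool := fun k j => decide ((j:ℕ) = (k:ℕ)+1)

lemma alone_solo_iff {k : Fin (n-1)} {j : Fin n} : alone (solo n k) j ↔ (j:ℕ) = (k:ℕ)+1 := by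
  constructor
  · intro ha
    simpa [solo] using ha.1
  · intro hj
    refine ⟨by simpa [solo] using hj, fun j' hj' => ?_⟩
    simp only [solo, decide_eq_false_iff_not]
    intro hc
    exact hj' (Fin.ext (by omega))

lemma pending_soloHist_zero (hn : 0 < n) :
    pending (List.ofFn (solo n)) (⟨0, hn⟩ : Fin n) := by
  intro v hv
  rw [List.mem_ofFn] at hv
  obtain ⟨k, rfl⟩ := hv
  rw [alone_solo_iff]
  simp

lemma not_pending_soloHist (hn : 0 < n) {j : Fin n} (hj : j ≠ ⟨0, hn⟩) :
    ¬ pending (List.ofFn (solo n)) j := by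
  have hj1 : 1 ≤ (j:ℕ) := by
    rcases Nat.eq_zero_or_pos j.val with h0 | h1
    · exact absurd (Fin.ext h0) hj
    · exact h1
  have hjn : (j:ℕ) < n := j.isLt
  have hk : (j:ℕ) - 1 < n - 1 := by omega
  intro hp
  refine hp (solo n ⟨(j:ℕ)-1, hk⟩) ?_ (alone_solo_iff.2 (by simp; omega))
  rw [List.mem_ofFn]
  exact ⟨_, rfl⟩

lemma histProb_soloHist_pos {p : ℕ → ℝ} (hp : ∀ t, 1 ≤ t → 0 ≤ p t ∧ p t < 1)
    (hppos : ∀ t, 1 ≤ t → 0 < p t) :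
    0 < histProb (fun _ : Fin n => ageProtocol p) (List.ofFn (solo n)) := by
  unfold histProb contProb
  apply Finset.prod_pos
  intro t ht'
  simp only [Finset.mem_range, List.length_ofFn] at ht'
  have ht : t < n - 1 := ht'
  rw [List.nil_append]
  set h : Hist n := List.ofFn (solo n) with hh
  have hlen : (h.take t).length = t := by
    rw [List.length_take, hh, List.length_ofFn]
    omega
  have hgd : h.getD t (fun _ => false) = solo n ⟨t, ht⟩ := by
    rw [List.getD_eq_getElem _ _ (by rw [hh, List.length_ofFn]; omega)]
    exact List.getElem_ofFn _
  rw [hgd]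
  apply Finset.prod_pos
  intro j _
  have hage : ageProtocol p (personal (h.take t) j) = p (t + 1) := by
    simp only [ageProtocol, personal, List.length_map, hlen]
  by_cases hpj : pending (h.take t) j
  · rw [if_pos hpj]
    by_cases hv : solo n ⟨t, ht⟩ j = true
    · rw [if_pos hv]
      simp only []
      rw [hage]
      exact hppos (t + 1) (by omega)
    · rw [if_neg hv]
      simp only []
      rw [hage]
      linarith [(hp (t + 1) (by omega)).2]
  · rw [if_neg hpj]
    have hjt : (j:ℕ) ≤ t := by
      unfold pending at hpj
      push_neg at hpj
      obtain ⟨v, hv, ha⟩ := hpj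
      rw [List.mem_take_iff_getElem] at hv
      obtain ⟨s, hs, rfl⟩ := hv
      have hsl : s < n - 1 := by
        rw [hh, List.length_ofFn] at hs
        omega
      have hst : s < t := by
        rw [hh, List.length_ofFn] at hs
        omega
      have he : h[s] = solo n ⟨s, hsl⟩ := List.getElem_ofFn _
      rw [he] at ha
      have := alone_solo_iff.1 ha
      simp at this
      omega
    have hv : ¬ (solo n ⟨t, ht⟩ j = true) := by
      simp [solo]
      omega
    rw [if_neg hv]
    exact one_pos

end Contention

namespace Contention

/-- A non-blocking anonymous age-based acknowledgment-based protocol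
(`p t < 1` for every slot `t`) for `n ≥ 1` players with finite expected latency is not
in equilibrium. -/
theorem nonblocking_age_based_not_equilibrium :
    ∀ (n : ℕ) (p : ℕ → ℝ), 1 ≤ n →
      (∀ t : ℕ, 1 ≤ t → 0 ≤ p t ∧ p t < 1) →
      (∀ i : Fin n, condLatency (fun _ : Fin n => ageProtocol p) [] i < ⊤) →
      ¬ IsEquilibrium (fun _ : Fin n => ageProtocol p) := by
  intro n p hn hp _hfin
  by_cases hex : ∃ T, p (T + 1) = 0
  · obtain ⟨T, hT⟩ := hex
    exact not_equilibrium_of_blocked hp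
      (histProb_replicate_pos hp T)
      (pending_replicate_false T ⟨0, hn⟩)
      (fun j _ _ => by rw [List.length_replicate]; exact hT)
  · push_neg at hex
    have hppos : ∀ t, 1 ≤ t → 0 < p t := by
      intro t ht
      have h0 := (hp t ht).1
      have hne := hex (t - 1)
      rw [Nat.sub_add_cancel ht] at hne
      exact lt_of_le_of_ne h0 (Ne.symm hne)
    exact not_equilibrium_of_blocked hp
      (histProb_soloHist_pos hp hppos)
      (pending_soloHist_zero hn)
      (fun j hj hpj => absurd hpj (not_pending_soloHist hn hj))


end Contention
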